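/- Let f : X → Y be a continuous surjection. Then f is d-open if and only if there exists a base B_Y for the topology of Y such that the family P = {f^{-1}(V) : V ∈ B_Y} has the property: for every subfamily S ⊆ P and every x ∉ cl_X ⋃S, there exists W ∈ P with x ∈ W and W ∩ ⋃S = ∅. -/

import Mathlib

open Set Topology

section Defs

variable {X : Type*}

/-- A set is regular closed if it equals the closure of its interior. -/
def IsRegClosed [TopologicalSpace X] (C : Set X) : Prop := closure (interior C) = C

/-- A set is regular open if it equals the interior of its closure. -/
def IsRegOpen [TopologicalSpace X] (V : Set X) : Prop := interior (closure V) = V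

/-- A countable κ-metric: axioms (K1)-(K3) and (K4_ω). -/
structure IsCountKappaMetric [TopologicalSpace X] (ρ : X → Set X → ℝ) : Prop where
  nonneg : ∀ x C, IsRegClosed C → 0 ≤ ρ x C
  k1 : ∀ x C, IsRegClosed C → (ρ x C = 0 ↔ x ∈ C)
  k2 : ∀ x C D, IsRegClosed C → IsRegClosed D → C ⊆ D → ρ x D ≤ ρ x C
  k3 : ∀ C, IsRegClosed C → Continuous fun x => ρ x C
  k4omega : ∀ C : ℕ → Set X, (∀ n, IsRegClosed (C n)) → (∀ n, C n ⊆ C (n + 1)) →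
    ∀ x, ρ x (closure (⋃ n, C n)) = ⨅ n, ρ x (C n)

/-- Axiom (K4): the infimum identity for arbitrary nonempty totally ordered
(by inclusion) families of regular closed sets. -/
def K4Chains [TopologicalSpace X] (ρ : X → Set X → ℝ) : Prop :=
  ∀ 𝒞 : Set (Set X), 𝒞.Nonempty → (∀ C ∈ 𝒞, IsRegClosed C) →
    (∀ C ∈ 𝒞, ∀ D ∈ 𝒞, C ⊆ D ∨ D ⊆ C) →
    ∀ x, ρ x (closure (⋃₀ 𝒞)) = sInf ((ρ x) '' 𝒞)

/-- A (full) κ-metric: axioms (K1)-(K4). -/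
structure IsKappaMetric [TopologicalSpace X] (ρ : X → Set X → ℝ)
    extends IsCountKappaMetric ρ : Prop where
  k4 : K4Chains ρ

/-- Countable chain condition. -/
def CCCSpace (X : Type*) [TopologicalSpace X] : Prop :=
  ∀ 𝒪 : Set (Set X), (∀ U ∈ 𝒪, IsOpen U ∧ U.Nonempty) →
    𝒪.PairwiseDisjoint id → 𝒪.Countable

/-- Pseudocompactness: every continuous real-valued function is bounded. -/
def Pseudocompact (X : Type*) [TopologicalSpace X] : Prop :=
  ∀ f : X → ℝ, Continuous f → ∃ M, ∀ x, |f x| ≤ M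

/-- d-open maps. -/
def IsDOpen {Y : Type*} [TopologicalSpace X] [TopologicalSpace Y] (f : X → Y) : Prop :=
  ∀ U : Set X, IsOpen U → f '' U ⊆ interior (closure (f '' U))

/-- Q-admissible families of regular open sets with respect to ρ. -/
def QAdmissible [TopologicalSpace X] (ρ : X → Set X → ℝ) (P : Set (Set X)) : Prop :=
  (∀ V ∈ P, IsRegOpen V) ∧
  (∀ V ∈ P, ∀ q : ℚ,
    interior ((fun x => ρ x (closure V)) ⁻¹' Iic (q : ℝ)) ∈ P ∧
    interior ((fun x => ρ x (closure V)) ⁻¹' Ici (q : ℝ)) ∈ P) ∧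
  (∀ V ∈ P, interior Vᶜ ∈ P) ∧
  (∀ U ∈ P, ∀ V ∈ P, U ∩ V ∈ P ∧ interior (closure (U ∪ V)) ∈ P)

/-- The equivalence relation ∼_P. -/
def pSetoid (P : Set (Set X)) : Setoid X where
  r x y := ∀ V ∈ P, (x ∈ V ↔ y ∈ V)
  iseqv := ⟨fun _ _ _ => Iff.rfl, fun h V hV => (h V hV).symm,
    fun h1 h2 V hV => (h1 V hV).trans (h2 V hV)⟩

/-- The quotient X_P. -/
def XP (P : Set (Set X)) : Type _ := Quotient (pSetoid P)

/-- The quotient map q : X → X_P. -/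
def qP (P : Set (Set X)) : X → XP P := Quotient.mk (pSetoid P)

/-- The topology on X_P generated by images of members of P. -/
def topXP [TopologicalSpace X] (P : Set (Set X)) : TopologicalSpace (XP P) :=
  TopologicalSpace.generateFrom ((fun V => qP P '' V) '' P)

end Defs
/-- Tkachenko's characterization of d-open maps. -/
theorem stmt19 {X Y : Type*} [TopologicalSpace X] [TopologicalSpace Y]
    (f : X → Y) (hf : Continuous f) (hsurj : Function.Surjective f) :
    IsDOpen f ↔ ∃ B : Set (Set Y), TopologicalSpace.IsTopologicalBasis B ∧
      ∀ S ⊆ (fun V => f ⁻¹' V) '' B, ∀ x ∉ closure (⋃₀ S),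
        ∃ W ∈ (fun V => f ⁻¹' V) '' B, x ∈ W ∧ W ∩ ⋃₀ S = ∅ := by
  constructor
  · intro hd
    refine ⟨{V | IsOpen V}, TopologicalSpace.isTopologicalBasis_opens, ?_⟩
    intro S hS x hx
    set U : Set X := (closure (⋃₀ S))ᶜ with hU
    have hUopen : IsOpen U := isClosed_closure.isOpen_compl
    have hxU : x ∈ U := hx
    set V : Set Y := interior (closure (f '' U)) with hV
    have hxV : f x ∈ V := hd U hUopen ⟨x, hxU, rfl⟩
    refine ⟨f ⁻¹' V, ⟨V, isOpen_interior, rfl⟩, hxV, ?_⟩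
    rw [Set.eq_empty_iff_forall_notMem]
    rintro z ⟨hzV, hzS⟩
    obtain ⟨T, hTS, hzT⟩ := hzS
    obtain ⟨V₀, hV₀B, rfl⟩ := hS hTS
    have hV₀open : IsOpen V₀ := hV₀B
    -- V ∩ V₀ is open, contains f z, and V ⊆ closure (f '' U)
    have hmeet : (V₀ ∩ f '' U).Nonempty := by
      have h1 : f z ∈ closure (f '' U) := interior_subset hzV
      have := (mem_closure_iff).mp h1 V₀ hV₀open hzT
      exact this.imp fun a ⟨h, h'⟩ => ⟨h, h'⟩
    obtain ⟨y, hyV₀, u, huU, rfl⟩ := hmeet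
    exact huU (subset_closure ⟨f ⁻¹' V₀, hTS, hyV₀⟩)
  · rintro ⟨B, hB, hprop⟩
    intro U hUopen
    rintro _ ⟨x, hxU, rfl⟩
    set S : Set (Set X) := (fun V => f ⁻¹' V) '' {V ∈ B | f ⁻¹' V ∩ U = ∅} with hSdef
    have hSsub : S ⊆ (fun V => f ⁻¹' V) '' B := Set.image_mono fun V hV => hV.1
    have hxnot : x ∉ closure (⋃₀ S) := by
      have hdisj : ⋃₀ S ⊆ Uᶜ := by
        rintro z ⟨T, ⟨V, ⟨_, hVdisj⟩, rfl⟩, hzT⟩ hzU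
        exact Set.eq_empty_iff_forall_notMem.mp hVdisj z ⟨hzT, hzU⟩
      have : closure (⋃₀ S) ⊆ Uᶜ :=
        closure_minimal hdisj (isOpen_compl_iff.mp (by simpa using hUopen))
      exact fun h => this h hxU
    obtain ⟨W, ⟨V₀, hV₀B, rfl⟩, hxW, hWdisj⟩ := hprop S hSsub x hxnot
    -- claim V₀ ⊆ closure (f '' U)
    have hsub : V₀ ⊆ closure (f '' U) := by
      intro y hy
      by_contra hyc
      obtain ⟨V₁, hV₁B, hyV₁, hV₁sub⟩ :=
        hB.exists_subset_of_mem_open (show y ∈ V₀ ∩ (closure (f '' U))ᶜ from ⟨hy, hyc⟩)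
          (hB.isOpen hV₀B |>.inter isClosed_closure.isOpen_compl)
      have hV₁disj : f ⁻¹' V₁ ∩ U = ∅ := by
        rw [Set.eq_empty_iff_forall_notMem]
        rintro u ⟨huV₁, huU⟩
        exact (hV₁sub huV₁).2 (subset_closure ⟨u, huU, rfl⟩)
      have hV₁S : f ⁻¹' V₁ ∈ S := ⟨V₁, ⟨hV₁B, hV₁disj⟩, rfl⟩
      obtain ⟨x', hx'⟩ := hsurj y
      have hx'V₁ : x' ∈ f ⁻¹' V₁ := by simp [hx', hyV₁]
      have : x' ∈ f ⁻¹' V₀ ∩ ⋃₀ S := ⟨(hV₁sub hx'V₁).1, ⟨_, hV₁S, hx'V₁⟩⟩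
      rw [hWdisj] at this
      exact this
    have : f x ∈ V₀ := hxW
    exact mem_interior.mpr ⟨V₀, hsub, hB.isOpen hV₀B, this⟩
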